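/- Let β₀, β₁ ∈ (0,1) with β₀ + β₁ > 1. For every finite binary string σ, P_{β₀,β₁}(σ0 ∉ Prune(ω) and σ1 ∈ Prune(ω) | σ ∈ Prune(ω)) = 1 − β₀; that is, the conditional probability that a node of the pruned infinite Galton–Watson tree has only a right child is 1 − β₀. -/

import Mathlib

open MeasureTheory

/-- The Galton–Watson tree of `ω`: all binary strings all of whose nonempty prefixes survive. -/
def gwTree (ω : {σ : List Bool // σ ≠ []} → Bool) : Set (List Bool) :=
  {σ | ∀ τ : {σ : List Bool // σ ≠ []}, τ.val <+: σ → ω τ = true}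

/-- The pruned tree: nodes of the Galton–Watson tree above which the tree is infinite
(has infinitely many extensions in the tree). -/
def gwPrune (ω : {σ : List Bool // σ ≠ []} → Bool) : Set (List Bool) :=
  {σ | σ ∈ gwTree ω ∧ {τ | σ <+: τ ∧ τ ∈ gwTree ω}.Infinite}

/-- Probability that coordinate `σ` takes value `b`: it is `1` (survives) with probability
`β₀` if the last bit of `σ` is `0`, and `β₁` if the last bit of `σ` is `1`. -/
def gwP (β₀ β₁ : ℝ) (σ : {σ : List Bool // σ ≠ []}) (b : Bool) : ℝ :=
  if b then (if σ.val.getLast σ.prop = false then β₀ else β₁)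
  else 1 - (if σ.val.getLast σ.prop = false then β₀ else β₁)

/-- `P` is the product measure `P_{β₀,β₁}`: a probability measure with independent coordinates,
coordinate `σ` equal to `1` with probability `β₀` or `β₁` according to the last bit of `σ`,
as expressed by its finite-dimensional distributions. -/
def IsGWMeasure (β₀ β₁ : ℝ) (P : Measure ({σ : List Bool // σ ≠ []} → Bool)) : Prop :=
  IsProbabilityMeasure P ∧
    ∀ (S : Finset {σ : List Bool // σ ≠ []}) (f : {σ : List Bool // σ ≠ []} → Bool),
      P {ω | ∀ σ ∈ S, ω σ = f σ} = ENNReal.ofReal (∏ σ ∈ S, gwP β₀ β₁ σ (f σ))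

namespace GWAux

open ProbabilityTheory

abbrev Idx : Type := {σ : List Bool // σ ≠ []}
abbrev W : Type := Idx → Bool

def shiftMap (σ : List Bool) (ω : W) : W :=
  fun η => ω ⟨σ ++ η.1, by simp [η.2]⟩

def app (σ : List Bool) : Idx → Idx := fun i => ⟨σ ++ i.1, by simp [i.2]⟩

lemma app_inj (σ : List Bool) : Function.Injective (app σ) := fun a b h =>
  Subtype.ext (List.append_cancel_left (congrArg Subtype.val h))

def treeEv (τ : List Bool) : Set W := {ω | τ ∈ gwTree ω}
def tEv (b : Bool) : Set W := {ω | ω ⟨[b], by simp⟩ = true}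
def infEv : Set W := {ω | (gwTree ω).Infinite}
def levEv (n : ℕ) : Set W := {ω | ∃ τ, τ.length = n ∧ τ ∈ gwTree ω}
def D (b : Bool) : Set W := tEv b ∩ shiftMap [b] ⁻¹' infEv

/- ### list/set identities -/

lemma prefix_append_cases {p σ η : List Bool} (h : p <+: σ ++ η) :
    p <+: σ ∨ ∃ t, t ≠ [] ∧ t <+: η ∧ p = σ ++ t := by
  rcases le_or_gt p.length σ.length with hl | hl
  · exact Or.inl (List.prefix_of_prefix_length_le h (σ.prefix_append η) hl)
  · have hσp : σ <+: p := List.prefix_of_prefix_length_le (σ.prefix_append η) h hl.le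
    obtain ⟨t, rfl⟩ := hσp
    refine Or.inr ⟨t, ?_, (List.prefix_append_right_inj σ).mp h, rfl⟩
    rintro rfl; simp at hl

lemma mem_gwTree_append {σ η : List Bool} {ω : W} :
    σ ++ η ∈ gwTree ω ↔ σ ∈ gwTree ω ∧ η ∈ gwTree (shiftMap σ ω) := by
  constructor
  · intro H
    refine ⟨fun i hi => H i (hi.trans (σ.prefix_append η)), fun i hi => ?_⟩
    exact H ⟨σ ++ i.1, by simp [i.2]⟩ ((List.prefix_append_right_inj σ).mpr hi)
  · rintro ⟨h1, h2⟩ i hi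
    rcases prefix_append_cases hi with hp | ⟨t, ht0, ht, hpt⟩
    · exact h1 i hp
    · obtain ⟨iv, ip⟩ := i
      simp only at hpt
      subst hpt
      exact h2 ⟨t, ht0⟩ ht

lemma gwTree_prefix {ω : W} {τ p : List Bool} (h : τ ∈ gwTree ω) (hp : p <+: τ) : p ∈ gwTree ω :=
  fun i hi => h i (hi.trans hp)

lemma nil_mem_gwTree (ω : W) : [] ∈ gwTree ω := fun i hi =>
  absurd (List.eq_nil_of_prefix_nil hi) i.2

lemma shiftMap_comp (σ η : List Bool) (ω : W) :
    shiftMap η (shiftMap σ ω) = shiftMap (σ ++ η) ω := by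
  funext i
  simp only [shiftMap]
  congr 1
  exact Subtype.ext (List.append_assoc σ η i.1).symm

lemma ext_eq_image {σ : List Bool} {ω : W} (hσ : σ ∈ gwTree ω) :
    {τ | σ <+: τ ∧ τ ∈ gwTree ω} = (σ ++ ·) '' gwTree (shiftMap σ ω) := by
  ext τ
  constructor
  · rintro ⟨⟨t, rfl⟩, htree⟩
    exact ⟨t, (mem_gwTree_append.mp htree).2, rfl⟩
  · rintro ⟨t, ht, rfl⟩
    exact ⟨σ.prefix_append t, mem_gwTree_append.mpr ⟨hσ, ht⟩⟩

lemma append_left_inj (σ : List Bool) : Function.Injective (σ ++ ·) := fun a b hab =>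
  List.append_cancel_left hab

lemma ext_infinite_iff {σ : List Bool} {ω : W} :
    {τ | σ <+: τ ∧ τ ∈ gwTree ω}.Infinite ↔ σ ∈ gwTree ω ∧ ω ∈ shiftMap σ ⁻¹' infEv := by
  constructor
  · intro h
    obtain ⟨τ, hpre, htree⟩ := h.nonempty
    have hσ : σ ∈ gwTree ω := gwTree_prefix htree hpre
    rw [ext_eq_image hσ] at h
    exact ⟨hσ, (Set.infinite_image_iff (append_left_inj σ).injOn).mp h⟩
  · rintro ⟨hσ, hinf⟩
    rw [ext_eq_image hσ]
    exact Set.Infinite.image (append_left_inj σ).injOn hinf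

lemma mem_prune_iff {σ : List Bool} {ω : W} :
    σ ∈ gwPrune ω ↔ ω ∈ treeEv σ ∩ shiftMap σ ⁻¹' infEv := by
  unfold gwPrune
  rw [Set.mem_setOf_eq, ext_infinite_iff]
  exact ⟨fun h => ⟨h.1, h.2.2⟩, fun h => ⟨h.1, h.1, h.2⟩⟩

lemma treeEv_single (b : Bool) : treeEv [b] = tEv b := by
  ext ω
  constructor
  · intro h; exact h ⟨[b], by simp⟩ (List.prefix_refl _)
  · intro h i hi
    have hlen : i.1 = [b] :=
      hi.eq_of_length (le_antisymm hi.length_le (List.length_pos_iff.mpr i.2))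
    obtain ⟨iv, ip⟩ := i
    simp only at hlen
    subst hlen
    exact h

lemma treeEv_append (σ η : List Bool) :
    treeEv (σ ++ η) = treeEv σ ∩ shiftMap σ ⁻¹' treeEv η := by
  ext ω; exact mem_gwTree_append

lemma levEv_zero : levEv 0 = Set.univ :=
  Set.eq_univ_of_forall fun ω => ⟨[], rfl, nil_mem_gwTree ω⟩

lemma levEv_antitone : Antitone levEv := by
  intro m n hmn ω hω
  obtain ⟨τ, hlen, htree⟩ := hω
  refine ⟨τ.take m, ?_, gwTree_prefix htree (List.take_prefix m τ)⟩
  simp [hlen, hmn]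

lemma infEv_eq_iInter : infEv = ⋂ n, levEv n := by
  ext ω
  simp only [infEv, Set.mem_iInter, Set.mem_setOf_eq]
  constructor
  · intro h n
    have hex : ∃ τ ∈ gwTree ω, n ≤ τ.length := by
      by_contra hc
      push_neg at hc
      exact h ((List.finite_length_lt Bool n).subset fun τ hτ => hc τ hτ)
    obtain ⟨τ, hτ, hn⟩ := hex
    exact ⟨τ.take n, by simp [Nat.min_eq_left hn], gwTree_prefix hτ (List.take_prefix n τ)⟩
  · intro h
    apply Set.infinite_of_injective_forall_mem
      (f := fun n : ℕ => (h n).choose)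
    · intro a b hab
      have := congrArg List.length hab
      rwa [(h a).choose_spec.1, (h b).choose_spec.1] at this
    · exact fun n => (h n).choose_spec.2

lemma mem_tEv_iff {b : Bool} {ω : W} : [b] ∈ gwTree ω ↔ ω ∈ tEv b :=
  Set.ext_iff.mp (treeEv_single b) ω

lemma levEv_succ (n : ℕ) :
    levEv (n + 1) =
      (tEv false ∩ shiftMap [false] ⁻¹' levEv n) ∪ (tEv true ∩ shiftMap [true] ⁻¹' levEv n) := by
  ext ω
  constructor
  · rintro ⟨τ, hlen, htree⟩
    match τ, hlen with
    | b :: η, hlen =>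
      have h2 := (mem_gwTree_append (σ := [b]) (η := η) (ω := ω)).mp htree
      have hb : ω ∈ tEv b := mem_tEv_iff.mp h2.1
      have hη : shiftMap [b] ω ∈ levEv n := ⟨η, by simpa using hlen, h2.2⟩
      cases b
      · exact Or.inl ⟨hb, hη⟩
      · exact Or.inr ⟨hb, hη⟩
  · rintro (⟨hb, η, hlen, htree⟩ | ⟨hb, η, hlen, htree⟩)
    · exact ⟨false :: η, by simp [hlen],
        mem_gwTree_append.mpr ⟨mem_tEv_iff.mpr hb, htree⟩⟩
    · exact ⟨true :: η, by simp [hlen],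
        mem_gwTree_append.mpr ⟨mem_tEv_iff.mpr hb, htree⟩⟩

lemma infEv_rec : infEv = D false ∪ D true := by
  ext ω
  have hDb : ∀ b : Bool, ω ∈ D b ↔ {τ | [b] <+: τ ∧ τ ∈ gwTree ω}.Infinite := by
    intro b
    rw [D, Set.mem_inter_iff, ← mem_tEv_iff, ext_infinite_iff]
  constructor
  · intro h
    by_contra hc
    rw [Set.mem_union] at hc
    push_neg at hc
    have hf0 : ¬ {τ | [false] <+: τ ∧ τ ∈ gwTree ω}.Infinite := fun hh => hc.1 ((hDb false).mpr hh)
    have hf1 : ¬ {τ | [true] <+: τ ∧ τ ∈ gwTree ω}.Infinite := fun hh => hc.2 ((hDb true).mpr hh)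
    rw [Set.not_infinite] at hf0 hf1
    apply h
    apply Set.Finite.subset (((hf0.union hf1).insert []))
    intro τ hτ
    match τ with
    | [] => exact Set.mem_insert _ _
    | b :: η =>
      have hb : [b] <+: b :: η := ⟨η, rfl⟩
      refine Set.mem_insert_of_mem _ ?_
      cases b
      · exact Or.inl ⟨hb, hτ⟩
      · exact Or.inr ⟨hb, hτ⟩
  · rintro (h | h)
    · exact ((hDb false).mp h).mono fun τ hτ => hτ.2
    · exact ((hDb true).mp h).mono fun τ hτ => hτ.2


/- ### measurability -/

def coordSA (I : Set Idx) : MeasurableSpace W :=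
  ⨆ i ∈ I, MeasurableSpace.comap (fun ω : W => ω i) ⊤

lemma coord_le (i : Idx) :
    MeasurableSpace.comap (fun ω : W => ω i) ⊤ ≤ (inferInstance : MeasurableSpace W) :=
  measurable_iff_comap_le.mp (measurable_pi_apply i)

lemma coordSA_le (I : Set Idx) : coordSA I ≤ (inferInstance : MeasurableSpace W) :=
  iSup₂_le fun i _ => coord_le i

lemma measurable_coord {I : Set Idx} {i : Idx} (hi : i ∈ I) :
    Measurable[coordSA I] (fun ω : W => ω i) := by
  rw [measurable_iff_comap_le]
  exact le_trans (le_of_eq rfl)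
    (le_biSup (fun j : Idx => MeasurableSpace.comap (fun ω : W => ω j) (⊤ : MeasurableSpace Bool)) hi)

lemma measurableSet_coord {I : Set Idx} {i : Idx} (hi : i ∈ I) (b : Bool) :
    MeasurableSet[coordSA I] {ω : W | ω i = b} :=
  measurable_coord hi (measurableSet_singleton b)

lemma measurableSet_treeEv {I : Set Idx} {τ : List Bool} (h : ∀ i : Idx, i.1 <+: τ → i ∈ I) :
    MeasurableSet[coordSA I] (treeEv τ) := by
  have hset : treeEv τ = ⋂ (i : Idx), ⋂ (_ : i.1 <+: τ), {ω : W | ω i = true} := by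
    ext ω; simp [treeEv, gwTree, Set.mem_iInter]
  rw [hset]
  exact MeasurableSet.iInter fun i => MeasurableSet.iInter fun hp => measurableSet_coord (h i hp) true

lemma le_apply {m₁ m₂ : MeasurableSpace W} (h : m₁ ≤ m₂) {s : Set W}
    (hs : MeasurableSet[m₁] s) : MeasurableSet[m₂] s := h _ hs

lemma measurableSet_treeEv' (τ : List Bool) : MeasurableSet (treeEv τ) :=
  le_apply (coordSA_le Set.univ) (measurableSet_treeEv (I := Set.univ) fun _ _ => trivial)

lemma measurableSet_tEv (b : Bool) : MeasurableSet (tEv b) :=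
  le_apply (coordSA_le Set.univ) (measurableSet_coord (I := Set.univ) trivial true)

lemma measurable_shiftMap (σ : List Bool) : Measurable (shiftMap σ) :=
  measurable_pi_lambda _ fun _ => measurable_pi_apply _

lemma measurable_shiftMap' {I : Set Idx} (σ : List Bool)
    (h : ∀ i : Idx, (⟨σ ++ i.1, by simp [i.2]⟩ : Idx) ∈ I) :
    Measurable[coordSA I] (shiftMap σ) := by
  rw [measurable_iff_comap_le]
  have hrw : MeasurableSpace.comap (shiftMap σ) MeasurableSpace.pi
      = ⨆ i : Idx, (MeasurableSpace.comap (fun ω : W => ω i) (⊤ : MeasurableSpace Bool)).comap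
          (shiftMap σ) := by
    rw [show (MeasurableSpace.pi : MeasurableSpace W)
        = ⨆ i : Idx, MeasurableSpace.comap (fun ω : W => ω i) (⊤ : MeasurableSpace Bool) from rfl,
      MeasurableSpace.comap_iSup]
  refine le_trans (le_of_eq hrw) (iSup_le fun i => ?_)
  rw [MeasurableSpace.comap_comp]
  exact le_trans (le_of_eq rfl) (measurable_iff_comap_le.mp (measurable_coord (h i)))

lemma measurableSet_levEv (n : ℕ) : MeasurableSet (levEv n) := by
  have hset : levEv n = ⋃ (τ : List Bool), ⋃ (_ : τ.length = n), treeEv τ := by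
    ext ω; simp [levEv, treeEv]
  rw [hset]
  exact MeasurableSet.iUnion fun τ => MeasurableSet.iUnion fun _ => measurableSet_treeEv' τ

lemma measurableSet_infEv : MeasurableSet infEv := by
  rw [infEv_eq_iInter]; exact MeasurableSet.iInter fun n => measurableSet_levEv n

/- ### independence -/

lemma bool_top : (⊤ : MeasurableSpace Bool) = MeasurableSpace.generateFrom {{true}} := by
  refine le_antisymm ?_ le_top
  intro s _
  have h1 : MeasurableSet[MeasurableSpace.generateFrom {({true} : Set Bool)}] {true} :=
    MeasurableSpace.measurableSet_generateFrom rfl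
  have h2 : MeasurableSet[MeasurableSpace.generateFrom {({true} : Set Bool)}] {false} := by
    have : ({false} : Set Bool) = {true}ᶜ := by
      ext b; cases b <;> simp
    rw [this]; exact h1.compl
  rw [← Set.biUnion_of_singleton s]
  exact MeasurableSet.biUnion s.to_countable (fun b _ => by cases b
                                                            exacts [h2, h1])

lemma comap_coord_eq (i : Idx) :
    MeasurableSpace.comap (fun ω : W => ω i) ⊤
      = MeasurableSpace.generateFrom {{ω : W | ω i = true}} := by
  rw [bool_top, MeasurableSpace.comap_generateFrom, Set.image_singleton]
  rfl

variable {β₀ β₁ : ℝ} {P : Measure W}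

lemma gwP_true_mem (i : Idx) : gwP β₀ β₁ i true = β₀ ∨ gwP β₀ β₁ i true = β₁ := by
  simp only [gwP, if_true]
  split
  · exact Or.inl rfl
  · exact Or.inr rfl

lemma iIndep_coord (hP : IsGWMeasure β₀ β₁ P) (h0 : 0 ≤ β₀) (h1 : 0 ≤ β₁) :
    iIndep (fun i : Idx => MeasurableSpace.comap (fun ω : W => ω i) ⊤) P := by
  haveI := hP.1
  apply iIndepSets.iIndep (fun i => coord_le i) (fun i : Idx => {{ω : W | ω i = true}})
      (fun i => ?_) (fun i => comap_coord_eq i)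
  · rw [iIndepSets_iff]
    intro S f hf
    have hfi : ∀ i ∈ S, f i = {ω : W | ω i = true} := fun i hi => hf i hi
    have hnn : ∀ i : Idx, 0 ≤ gwP β₀ β₁ i true := by
      intro i; rcases gwP_true_mem (β₀ := β₀) (β₁ := β₁) i with h | h <;> rw [h] <;> assumption
    have h1' : (⋂ i ∈ S, f i) = {ω : W | ∀ i ∈ S, ω i = (fun _ => true) i} := by
      ext ω
      simp only [Set.mem_iInter, Set.mem_setOf_eq]
      exact ⟨fun h i hi => by have := h i hi; rwa [hfi i hi] at this,
             fun h i hi => by rw [hfi i hi]; exact h i hi⟩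
    rw [h1', hP.2, ENNReal.ofReal_prod_of_nonneg (fun i _ => hnn i)]
    apply Finset.prod_congr rfl
    intro i hi
    rw [hfi i hi]
    have hs := hP.2 {i} (fun _ => true)
    simpa using hs.symm
  · intro s hs t ht _
    rw [Set.mem_singleton_iff] at hs ht
    subst hs; subst ht
    simp

lemma indep_coordSA (hP : IsGWMeasure β₀ β₁ P) (h0 : 0 ≤ β₀) (h1 : 0 ≤ β₁)
    {I J : Set Idx} (hIJ : Disjoint I J) :
    Indep (coordSA I) (coordSA J) P :=
  indep_iSup_of_disjoint (fun i => coord_le i) (iIndep_coord hP h0 h1) hIJ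

lemma indep_mul (hP : IsGWMeasure β₀ β₁ P) (h0 : 0 ≤ β₀) (h1 : 0 ≤ β₁)
    {I J : Set Idx} (hIJ : Disjoint I J) {A B : Set W}
    (hA : MeasurableSet[coordSA I] A) (hB : MeasurableSet[coordSA J] B) :
    P (A ∩ B) = P A * P B :=
  (Indep_iff _ _ _).mp (indep_coordSA hP h0 h1 hIJ) A B hA hB


/- ### cylinders and shift invariance -/

def cylSets : Set (Set W) := {A | ∃ (S : Finset Idx) (f : Idx → Bool), A = {ω | ∀ i ∈ S, ω i = f i}}

lemma measurableSet_cyl {S : Finset Idx} {f : Idx → Bool} :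
    MeasurableSet {ω : W | ∀ i ∈ S, ω i = f i} := by
  have hset : {ω : W | ∀ i ∈ S, ω i = f i} = ⋂ i ∈ S, {ω : W | ω i = f i} := by
    ext; simp
  rw [hset]
  exact Finset.measurableSet_biInter S fun i _ =>
    le_apply (coordSA_le Set.univ) (measurableSet_coord (I := Set.univ) trivial (f i))

lemma generateFrom_cyl :
    (inferInstance : MeasurableSpace W) = MeasurableSpace.generateFrom cylSets := by
  refine le_antisymm ?_ (MeasurableSpace.generateFrom_le ?_)
  · have hrw : (inferInstance : MeasurableSpace W)
        = ⨆ i : Idx, MeasurableSpace.comap (fun ω : W => ω i) (⊤ : MeasurableSpace Bool) := rfl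
    rw [hrw]
    refine iSup_le fun i => ?_
    rw [comap_coord_eq i]
    refine MeasurableSpace.generateFrom_le ?_
    rintro A rfl
    refine MeasurableSpace.measurableSet_generateFrom ?_
    refine ⟨{i}, fun _ => true, ?_⟩
    ext ω; simp
  · rintro A ⟨S, f, rfl⟩
    exact measurableSet_cyl

lemma isPiSystem_cyl : IsPiSystem cylSets := by
  classical
  rintro A ⟨S, f, rfl⟩ B ⟨T, g, rfl⟩ hne
  obtain ⟨ω₀, hω₀⟩ := hne
  refine ⟨S ∪ T, fun i => if i ∈ S then f i else g i, ?_⟩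
  have hfg : ∀ i, i ∈ S → i ∈ T → f i = g i := fun i hiS hiT => by
    rw [← hω₀.1 i hiS, hω₀.2 i hiT]
  ext ω
  simp only [Set.mem_inter_iff, Set.mem_setOf_eq, Finset.mem_union]
  constructor
  · rintro ⟨hS, hT⟩ i hi
    by_cases hiS : i ∈ S
    · simp [hiS, hS i hiS]
    · simp only [hiS, if_false]
      exact hT i (hi.resolve_left hiS)
  · intro h
    constructor
    · intro i hiS
      have := h i (Or.inl hiS)
      simpa [hiS] using this
    · intro i hiT
      have := h i (Or.inr hiT)
      by_cases hiS : i ∈ S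
      · rw [if_pos hiS] at this
        rw [this, hfg i hiS hiT]
      · rwa [if_neg hiS] at this

variable {β₀ β₁ : ℝ} {P : Measure W}

lemma gwP_shift (σ : List Bool) (i : Idx) (b : Bool) :
    gwP β₀ β₁ (app σ i) b = gwP β₀ β₁ i b := by
  have h : (σ ++ i.1).getLast (by simp [i.2]) = i.1.getLast i.2 := List.getLast_append_of_ne_nil _ i.2
  simp only [gwP, app, h]

lemma map_shiftMap (hP : IsGWMeasure β₀ β₁ P) (σ : List Bool) : P.map (shiftMap σ) = P := by
  haveI := hP.1
  haveI : IsProbabilityMeasure (P.map (shiftMap σ)) :=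
    Measure.isProbabilityMeasure_map (measurable_shiftMap σ).aemeasurable
  refine ext_of_generate_finite cylSets generateFrom_cyl isPiSystem_cyl ?_ (by simp)
  rintro A ⟨S, f, rfl⟩
  rw [Measure.map_apply (measurable_shiftMap σ) measurableSet_cyl]
  have hpre : shiftMap σ ⁻¹' {ω | ∀ i ∈ S, ω i = f i}
      = {ω | ∀ j ∈ S.map ⟨app σ, app_inj σ⟩, ω j = Function.extend (app σ) f (fun _ => true) j} := by
    ext ω
    simp only [Set.mem_preimage, Set.mem_setOf_eq, Finset.mem_map, Function.Embedding.coeFn_mk]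
    constructor
    · rintro h j ⟨i, hi, rfl⟩
      rw [(app_inj σ).extend_apply]
      exact h i hi
    · intro h i hi
      have := h (app σ i) ⟨i, hi, rfl⟩
      rwa [(app_inj σ).extend_apply] at this
  rw [hpre, hP.2, hP.2, Finset.prod_map]
  congr 1
  refine Finset.prod_congr rfl fun i _ => ?_
  rw [Function.Embedding.coeFn_mk, (app_inj σ).extend_apply]
  exact gwP_shift σ i (f i)

lemma meas_shift_preimage (hP : IsGWMeasure β₀ β₁ P) (σ : List Bool) {A : Set W}
    (hA : MeasurableSet A) : P (shiftMap σ ⁻¹' A) = P A := by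
  rw [← Measure.map_apply (measurable_shiftMap σ) hA, map_shiftMap hP σ]

lemma meas_coord (hP : IsGWMeasure β₀ β₁ P) (i : Idx) :
    P {ω | ω i = true} = ENNReal.ofReal (if i.1.getLast i.2 = false then β₀ else β₁) := by
  have hs := hP.2 {i} (fun _ => true)
  simpa [gwP] using hs

lemma meas_tEv (hP : IsGWMeasure β₀ β₁ P) (b : Bool) :
    P (tEv b) = ENNReal.ofReal (if b then β₁ else β₀) := by
  have hc := meas_coord hP ⟨[b], by simp⟩
  simp only [List.getLast_singleton] at hc
  have : tEv b = {ω : W | ω ⟨[b], by simp⟩ = true} := rfl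
  rw [this, hc]
  cases b <;> simp

lemma meas_treeEv (hP : IsGWMeasure β₀ β₁ P) (hβ0 : 0 < β₀) (hβ1 : 0 < β₁) (σ : List Bool) :
    ∃ c : ℝ, 0 < c ∧ P (treeEv σ) = ENNReal.ofReal c := by
  classical
  set S : Finset Idx :=
    Finset.image (fun n : Fin σ.length =>
      (⟨σ.take (n.1+1), by
        intro hnil
        rcases List.take_eq_nil_iff.mp hnil with h | h
        · omega
        · subst h; exact absurd n.2 (by simp)⟩ : Idx)) Finset.univ with hS
  have hmem : ∀ i : Idx, i ∈ S ↔ i.1 <+: σ := by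
    intro i
    simp only [hS, Finset.mem_image, Finset.mem_univ, true_and]
    constructor
    · rintro ⟨n, rfl⟩
      exact List.take_prefix _ _
    · intro hp
      have hlen : i.1.length ≤ σ.length := hp.length_le
      have hpos : 0 < i.1.length := List.length_pos_iff.mpr i.2
      refine ⟨⟨i.1.length - 1, by omega⟩, ?_⟩
      apply Subtype.ext
      simp only
      rw [show i.1.length - 1 + 1 = i.1.length by omega]
      exact (List.prefix_iff_eq_take.mp hp).symm
  refine ⟨∏ i ∈ S, gwP β₀ β₁ i true, Finset.prod_pos (fun i _ => ?_), ?_⟩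
  · rcases gwP_true_mem (β₀ := β₀) (β₁ := β₁) i with h | h <;> rw [h] <;> assumption
  · have hset : treeEv σ = {ω : W | ∀ i ∈ S, ω i = (fun _ => true) i} := by
      ext ω
      constructor
      · intro h i hi
        exact h i ((hmem i).mp hi)
      · intro h i hp
        exact h i ((hmem i).mpr hp)
    rw [hset, hP.2]


/- ### disjoint index sets -/

def preSet (σ : List Bool) : Set Idx := {i | i.1 <+: σ}
def sufSet (σ : List Bool) : Set Idx := Set.range (app σ)
def headSet (b : Bool) : Set Idx := {i | ∃ t, i.1 = b :: t}

lemma disj_pre_suf (σ : List Bool) : Disjoint (preSet σ) (sufSet σ) := by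
  rw [Set.disjoint_left]
  rintro i hi ⟨j, rfl⟩
  have h1 : (app σ j).1.length ≤ σ.length := hi.length_le
  have h2 : 0 < j.1.length := List.length_pos_iff.mpr j.2
  simp only [app, List.length_append] at h1
  omega

lemma disj_single_suf (b : Bool) :
    Disjoint ({(⟨[b], by simp⟩ : Idx)} : Set Idx) (sufSet [b]) := by
  rw [Set.disjoint_left]
  rintro i hi ⟨j, hj⟩
  rw [Set.mem_singleton_iff] at hi
  subst hi
  have hval : [b] ++ j.1 = [b] := congrArg Subtype.val hj
  have hlen := congrArg List.length hval
  rw [List.length_append] at hlen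
  have h2 : 0 < j.1.length := List.length_pos_iff.mpr j.2
  simp only [List.length_cons, List.length_nil] at hlen
  omega

lemma sufSet_subset_head (b : Bool) : sufSet [b] ⊆ headSet b := by
  rintro i ⟨j, rfl⟩; exact ⟨j.1, rfl⟩

lemma mem_sufSet (σ : List Bool) (i : Idx) :
    (⟨σ ++ i.1, by simp [i.2]⟩ : Idx) ∈ sufSet σ := ⟨i, rfl⟩

lemma single_mem_head (b : Bool) : (⟨[b], by simp⟩ : Idx) ∈ headSet b := ⟨[], rfl⟩

lemma disj_head : Disjoint (headSet false) (headSet true) := by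
  rw [Set.disjoint_left]
  rintro i ⟨t, ht⟩ ⟨s, hs⟩
  rw [ht] at hs
  simp at hs

variable {β₀ β₁ : ℝ} {P : Measure W}

lemma meas_D_pre (hP : IsGWMeasure β₀ β₁ P) (h0 : 0 ≤ β₀) (h1 : 0 ≤ β₁)
    {F : Set W} (hF : MeasurableSet F) (b : Bool) :
    P (tEv b ∩ shiftMap [b] ⁻¹' F) = ENNReal.ofReal (if b then β₁ else β₀) * P F := by
  have hA : MeasurableSet[coordSA ({(⟨[b], by simp⟩ : Idx)} : Set Idx)] (tEv b) :=
    measurableSet_coord (Set.mem_singleton _) true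
  have hB : MeasurableSet[coordSA (sufSet [b])] (shiftMap [b] ⁻¹' F) :=
    (measurable_shiftMap' [b] (fun i => mem_sufSet [b] i)) hF
  have hsp := meas_shift_preimage hP ([b]) hF
  rw [indep_mul hP h0 h1 (disj_single_suf b) hA hB, meas_tEv hP b, hsp]

lemma measurableSet_D_head (hF : MeasurableSet (infEv : Set W)) (b : Bool) :
    MeasurableSet[coordSA (headSet b)] (D b) :=
  (measurableSet_coord (single_mem_head b) true).inter
    ((measurable_shiftMap' [b] (fun i => sufSet_subset_head b (mem_sufSet [b] i))) hF)

lemma meas_G (hP : IsGWMeasure β₀ β₁ P) (h0 : 0 ≤ β₀) (h1 : 0 ≤ β₁)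
    {F : Set W} (hF : MeasurableSet F) :
    (P ((tEv false ∩ shiftMap [false] ⁻¹' F) ∪ (tEv true ∩ shiftMap [true] ⁻¹' F))).toReal
      = (β₀ + β₁) * (P F).toReal - (β₀ * β₁) * (P F).toReal ^ 2 := by
  haveI := hP.1
  set A := tEv false ∩ shiftMap [false] ⁻¹' F with hA
  set B := tEv true ∩ shiftMap [true] ⁻¹' F with hB
  have hDm : ∀ b : Bool, MeasurableSet[coordSA (headSet b)] (tEv b ∩ shiftMap [b] ⁻¹' F) :=
    fun b => (measurableSet_coord (single_mem_head b) true).inter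
      ((measurable_shiftMap' [b] (fun i => sufSet_subset_head b (mem_sufSet [b] i))) hF)
  have hABmul : P (A ∩ B) = P A * P B :=
    indep_mul hP h0 h1 disj_head (hDm false) (hDm true)
  have hPA : P A = ENNReal.ofReal β₀ * P F := by
    have := meas_D_pre hP h0 h1 hF false; rw [hA]; simpa using this
  have hPB : P B = ENNReal.ofReal β₁ * P F := by
    have := meas_D_pre hP h0 h1 hF true; rw [hB]; simpa using this
  have hkey := measure_union_add_inter (μ := P) A (le_apply (coordSA_le _) (hDm true))
  rw [hABmul, hPA, hPB] at hkey
  have h2 := congrArg ENNReal.toReal hkey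
  rw [ENNReal.toReal_add (measure_ne_top P _) (by finiteness),
    ENNReal.toReal_add (by finiteness) (by finiteness)] at h2
  simp only [ENNReal.toReal_mul, ENNReal.toReal_ofReal h0, ENNReal.toReal_ofReal h1] at h2
  linear_combination h2

lemma lev_ge (hP : IsGWMeasure β₀ β₁ P) (h0 : β₀ ∈ Set.Ioo (0:ℝ) 1) (h1 : β₁ ∈ Set.Ioo (0:ℝ) 1)
    (hsum : 1 < β₀ + β₁) :
    ∀ n, (β₀ + β₁ - 1)/(β₀*β₁) ≤ (P (levEv n)).toReal := by
  haveI := hP.1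
  obtain ⟨hb0, hb0'⟩ := h0
  obtain ⟨hb1, hb1'⟩ := h1
  set p := (β₀+β₁-1)/(β₀*β₁) with hp
  have hbb : 0 < β₀*β₁ := mul_pos hb0 hb1
  have hple : p ≤ 1 := by rw [hp, div_le_one hbb]; nlinarith
  have h2q : 2*(β₀*β₁) ≤ β₀+β₁ := by nlinarith
  intro n
  induction n with
  | zero =>
    rw [levEv_zero]
    simp only [measure_univ, ENNReal.toReal_one]
    exact hple
  | succ n ih =>
    have hx1 : (P (levEv n)).toReal ≤ 1 := by
      have hle := prob_le_one (μ := P) (s := levEv n)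
      simpa using ENNReal.toReal_mono ENNReal.one_ne_top hle
    rw [levEv_succ, meas_G hP hb0.le hb1.le (measurableSet_levEv n)]
    set x := (P (levEv n)).toReal with hxdef
    have hSp : (β₀+β₁)*p - (β₀*β₁)*p^2 = p := by
      rw [hp]; field_simp; ring
    have hfac : 0 ≤ (x - p) * ((β₀+β₁) - (β₀*β₁)*(x+p)) := by
      apply mul_nonneg (by linarith)
      have : (β₀*β₁)*(x+p) ≤ 2*(β₀*β₁) := by nlinarith
      linarith
    nlinarith [hfac, hSp]

lemma meas_infEv (hP : IsGWMeasure β₀ β₁ P) (h0 : β₀ ∈ Set.Ioo (0:ℝ) 1)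
    (h1 : β₁ ∈ Set.Ioo (0:ℝ) 1) (hsum : 1 < β₀ + β₁) :
    P infEv = ENNReal.ofReal ((β₀+β₁-1)/(β₀*β₁)) := by
  haveI := hP.1
  set p := (β₀+β₁-1)/(β₀*β₁) with hp
  have hbb : 0 < β₀*β₁ := mul_pos h0.1 h1.1
  have hppos : 0 < p := div_pos (by linarith) hbb
  have htend : Filter.Tendsto (fun n => P (levEv n)) Filter.atTop (nhds (P infEv)) := by
    rw [infEv_eq_iInter]
    exact tendsto_measure_iInter_atTop (fun n => (measurableSet_levEv n).nullMeasurableSet)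
      levEv_antitone ⟨0, measure_ne_top P _⟩
  have htr : Filter.Tendsto (fun n => (P (levEv n)).toReal) Filter.atTop
      (nhds (P infEv).toReal) :=
    (ENNReal.tendsto_toReal (measure_ne_top P _)).comp htend
  have hge : p ≤ (P infEv).toReal := ge_of_tendsto' htr (lev_ge hP h0 h1 hsum)
  have heq : (P infEv).toReal
      = (β₀+β₁)*(P infEv).toReal - (β₀*β₁)*(P infEv).toReal^2 := by
    conv_lhs => rw [infEv_rec]
    exact meas_G hP h0.1.le h1.1.le measurableSet_infEv
  set x := (P infEv).toReal with hxdef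
  have hx0 : 0 < x := lt_of_lt_of_le hppos hge
  have h2 : x * ((β₀+β₁-1) - (β₀*β₁)*x) = 0 := by linear_combination -heq
  have h3 : (β₀+β₁-1) - (β₀*β₁)*x = 0 := by
    rcases mul_eq_zero.mp h2 with h | h
    · exact absurd h (ne_of_gt hx0)
    · exact h
  have hx : x = p := by
    rw [hp]
    rw [eq_div_iff hbb.ne']
    linarith
  rw [← ENNReal.ofReal_toReal (measure_ne_top P infEv)]
  exact congrArg ENNReal.ofReal hx

end GWAux

open GWAux

/-- For `β₀, β₁ ∈ (0,1)` with `β₀ + β₁ > 1` and every finite binary string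
`σ`: the conditional probability, given `σ ∈ Prune(ω)`, that `σ` has only a right child in
`Prune(ω)` (i.e. `σ0 ∉ Prune(ω)` and `σ1 ∈ Prune(ω)`) is `1 - β₀`. -/
theorem stmt10 (β₀ β₁ : ℝ) (h0 : β₀ ∈ Set.Ioo (0 : ℝ) 1) (h1 : β₁ ∈ Set.Ioo (0 : ℝ) 1)
    (hsum : 1 < β₀ + β₁)
    (P : Measure ({σ : List Bool // σ ≠ []} → Bool)) (hP : IsGWMeasure β₀ β₁ P)
    (σ : List Bool) :
    ProbabilityTheory.cond P {ω | σ ∈ gwPrune ω}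
        {ω | σ ++ [false] ∉ gwPrune ω ∧ σ ++ [true] ∈ gwPrune ω} =
      ENNReal.ofReal (1 - β₀) := by

  classical
  haveI := hP.1
  set p := (β₀ + β₁ - 1) / (β₀ * β₁) with hpdef
  have hbb : 0 < β₀ * β₁ := mul_pos h0.1 h1.1
  have hppos : 0 < p := div_pos (by linarith) hbb
  have hple : p ≤ 1 := by
    rw [hpdef, div_le_one hbb]
    nlinarith [h0.1, h0.2, h1.1, h1.2]
  have hq : P infEv = ENNReal.ofReal p := by
    rw [hpdef]; exact meas_infEv hP h0 h1 hsum
  -- event identifications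
  have hA : {ω : W | σ ∈ gwPrune ω} = treeEv σ ∩ shiftMap σ ⁻¹' infEv := by
    ext ω; exact mem_prune_iff
  have hDb : ∀ (b : Bool) (ω : W),
      σ ++ [b] ∈ gwPrune ω ↔ ω ∈ treeEv σ ∧ shiftMap σ ω ∈ D b := by
    intro b ω
    rw [mem_prune_iff]
    constructor
    · rintro ⟨ht, hinf⟩
      have ht' := (Set.ext_iff.mp (treeEv_append σ [b]) ω).mp ht
      refine ⟨ht'.1, mem_tEv_iff.mp ht'.2, ?_⟩
      rw [Set.mem_preimage, shiftMap_comp]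
      exact hinf
    · rintro ⟨ht, htb, hinf⟩
      refine ⟨(Set.ext_iff.mp (treeEv_append σ [b]) ω).mpr ⟨ht, mem_tEv_iff.mpr htb⟩, ?_⟩
      show shiftMap (σ ++ [b]) ω ∈ infEv
      rw [← shiftMap_comp]
      exact hinf
  have hD1sub : D true ⊆ infEv := by
    rw [infEv_rec]; exact Set.subset_union_right
  have hAB : {ω : W | σ ∈ gwPrune ω}
        ∩ {ω : W | σ ++ [false] ∉ gwPrune ω ∧ σ ++ [true] ∈ gwPrune ω}
      = treeEv σ ∩ shiftMap σ ⁻¹' ((D false)ᶜ ∩ D true) := by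
    ext ω
    simp only [Set.mem_inter_iff, Set.mem_setOf_eq, Set.mem_preimage, Set.mem_compl_iff]
    constructor
    · rintro ⟨hσp, hnf, htp⟩
      obtain ⟨ht, hD1⟩ := (hDb true ω).mp htp
      exact ⟨ht, fun hf => hnf ((hDb false ω).mpr ⟨ht, hf⟩), hD1⟩
    · rintro ⟨ht, hf, hD1⟩
      exact ⟨mem_prune_iff.mpr ⟨ht, hD1sub hD1⟩,
        ⟨fun hfp => hf ((hDb false ω).mp hfp).2, (hDb true ω).mpr ⟨ht, hD1⟩⟩⟩
  have hAmeas : MeasurableSet {ω : W | σ ∈ gwPrune ω} := by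
    rw [hA]
    exact (measurableSet_treeEv' σ).inter ((measurable_shiftMap σ) measurableSet_infEv)
  rw [ProbabilityTheory.cond_apply hAmeas, hAB, hA]
  obtain ⟨c, hcpos, hPtree⟩ := meas_treeEv hP h0.1 h1.1 σ
  have hsplit : ∀ {F : Set W}, MeasurableSet F →
      P (treeEv σ ∩ shiftMap σ ⁻¹' F) = ENNReal.ofReal c * P F := by
    intro F hF
    have hA' : MeasurableSet[coordSA (preSet σ)] (treeEv σ) :=
      measurableSet_treeEv (fun i hi => hi)
    have hB' : MeasurableSet[coordSA (sufSet σ)] (shiftMap σ ⁻¹' F) :=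
      (measurable_shiftMap' σ (fun i => mem_sufSet σ i)) hF
    have hsp := meas_shift_preimage hP σ hF
    rw [indep_mul hP h0.1.le h1.1.le (disj_pre_suf σ) hA' hB', hPtree, hsp]
  have hDmb : ∀ b : Bool, MeasurableSet (D b) :=
    fun b => le_apply (coordSA_le _) (measurableSet_D_head measurableSet_infEv b)
  have hDmeasc : MeasurableSet ((D false)ᶜ ∩ D true) := ((hDmb false).compl).inter (hDmb true)
  have hPD : ∀ b : Bool, P (D b) = ENNReal.ofReal ((if b then β₁ else β₀) * p) := by
    intro b
    have hDb' : P (D b) = ENNReal.ofReal (if b then β₁ else β₀) * P infEv :=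
      meas_D_pre hP h0.1.le h1.1.le measurableSet_infEv b
    rw [hDb', hq, ← ENNReal.ofReal_mul (by cases b <;> simp [h0.1.le, h1.1.le])]
  have hPDc : P ((D false)ᶜ) = ENNReal.ofReal (1 - β₀ * p) := by
    rw [measure_compl (hDmb false) (measure_ne_top P _), measure_univ, hPD false]
    simp only [Bool.false_eq_true, if_false]
    rw [← ENNReal.ofReal_one, ← ENNReal.ofReal_sub _ (mul_nonneg h0.1.le hppos.le)]
  have hb0p : β₀ * p ≤ 1 := by nlinarith [h0.2, hple, hppos, h0.1]
  have hPnum : P ((D false)ᶜ ∩ D true) = ENNReal.ofReal ((1 - β₀*p) * (β₁*p)) := by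
    have h := indep_mul hP h0.1.le h1.1.le disj_head
      ((measurableSet_D_head measurableSet_infEv false).compl)
      (measurableSet_D_head measurableSet_infEv true)
    rw [h, hPDc, hPD true]
    rw [← ENNReal.ofReal_mul (by linarith)]
    norm_num
  rw [hsplit measurableSet_infEv, hsplit hDmeasc, hq, hPnum]
  have harith : (1 - β₀*p) * (β₁*p) = (1-β₀) * p := by
    rw [hpdef]
    have hb0 := h0.1.ne'
    have hb1 := h1.1.ne'
    field_simp
    ring
  rw [harith, ENNReal.ofReal_mul (by linarith [h0.2] : (0:ℝ) ≤ 1 - β₀)]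
  have ha0 : ENNReal.ofReal c * ENNReal.ofReal p ≠ 0 := by
    apply mul_ne_zero <;> simp [ENNReal.ofReal_eq_zero] <;> linarith
  have hatop : ENNReal.ofReal c * ENNReal.ofReal p ≠ ⊤ :=
    ENNReal.mul_ne_top ENNReal.ofReal_ne_top ENNReal.ofReal_ne_top
  rw [show ENNReal.ofReal c * (ENNReal.ofReal (1-β₀) * ENNReal.ofReal p)
      = ENNReal.ofReal (1-β₀) * (ENNReal.ofReal c * ENNReal.ofReal p) by ring]
  rw [mul_comm, mul_assoc, ENNReal.mul_inv_cancel ha0 hatop, mul_one]
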